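/- In a binary-conflict-free net, if σt and σρ₁tρ₂ are finite firing sequences with t not occurring in ρ₁, then σtρ₁ρ₂ is a firing sequence and σtρ₁ρ₂ ≡₀* σρ₁tρ₂. -/

import Mathlib

open Relation

/-- A place/transition net with place type `S` and transition type `T`. -/
structure Net (S T : Type) where
  /-- arc weight from place `s` to transition `t` -/
  pre : T → S → ℕ
  /-- arc weight from transition `t` to place `s` -/
  post : T → S → ℕ
  /-- the initial marking -/
  M0 : S → ℕ
  pre_finite : ∀ t, {s | pre t s > 0}.Finite
  pre_nonempty : ∀ t, ∃ s, pre t s > 0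
  post_finite : ∀ t, {s | post t s > 0}.Finite

namespace Net

variable {S T : Type} (N : Net S T)

/-- the singleton step `{t}` is enabled at marking `M` -/
def Enabled (t : T) (M : S → ℕ) : Prop := ∀ s, N.pre t s ≤ M s

/-- the two-element multiset step `{t,u}` is enabled at marking `M` -/
def Enabled2 (t u : T) (M : S → ℕ) : Prop := ∀ s, N.pre t s + N.pre u s ≤ M s

/-- firing transition `t` leads from marking `M` to marking `M'` -/
def Fires (t : T) (M M' : S → ℕ) : Prop :=
  N.Enabled t M ∧ M' = fun s => M s - N.pre t s + N.post t s

/-- firing the finite transition sequence `σ` leads from `M` to `M'` -/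
inductive FiresList : (S → ℕ) → List T → (S → ℕ) → Prop
  | nil (M : S → ℕ) : FiresList M [] M
  | cons {M M₁ M' : S → ℕ} {t : T} {σ : List T} :
      N.Fires t M M₁ → FiresList M₁ σ M' → FiresList M (t :: σ) M'

/-- a marking is reachable -/
def Reachable (M : S → ℕ) : Prop := ∃ σ : List T, N.FiresList N.M0 σ M

/-- `σ` is a finite firing sequence of `N` -/
def FS (σ : List T) : Prop := ∃ M, N.FiresList N.M0 σ M

/-- `σ` is a (possibly infinite) firing sequence of `N` -/
def FSInf (σ : Stream'.Seq T) : Prop := ∀ n, N.FS (σ.take n)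

/-- adjacency `≡₀` on finite firing sequences -/
def Adj (σ ρ : List T) : Prop :=
  ∃ (α β : List T) (t u : T) (M : S → ℕ),
    σ = α ++ t :: u :: β ∧ ρ = α ++ u :: t :: β ∧
    N.FiresList N.M0 α M ∧ N.Enabled2 t u M ∧ N.FS σ ∧ N.FS ρ

/-- adjacency `≡₀` on possibly infinite firing sequences -/
def AdjSeq (σ ρ : Stream'.Seq T) : Prop :=
  ∃ (α : List T) (β : Stream'.Seq T) (t u : T) (M : S → ℕ),
    σ = (Stream'.Seq.ofList (α ++ [t, u])).append β ∧
    ρ = (Stream'.Seq.ofList (α ++ [u, t])).append β ∧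
    N.FiresList N.M0 α M ∧ N.Enabled2 t u M ∧ N.FSInf σ ∧ N.FSInf ρ

end Net

/-- the finite sequence `l` is a prefix of the possibly infinite sequence `s` -/
def ListPrefixSeq {T : Type} (l : List T) (s : Stream'.Seq T) : Prop :=
  s.take l.length = l

namespace Net

variable {S T : Type} (N : Net S T)

/-- the preorder `⊑₀^∞` on possibly infinite firing sequences -/
def Sqsubseteq0 (σ ρ : Stream'.Seq T) : Prop :=
  ∀ σ'' : List T, N.FS σ'' → ListPrefixSeq σ'' σ →
    ∃ σ' ρ' : List T, N.FS σ' ∧ N.FS ρ' ∧ σ'' <+: σ' ∧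
      ReflTransGen N.Adj σ' ρ' ∧ ListPrefixSeq ρ' ρ

end Net

/-- `N` is binary-conflict-free: any two distinct transitions individually
enabled at a reachable marking are enabled together as a step. -/
def Net.BinaryConflictFree {S T : Type} (N : Net S T) : Prop :=
  ∀ M, N.Reachable M → ∀ t u : T, t ≠ u →
    N.Enabled t M → N.Enabled u M → N.Enabled2 t u M

namespace Net

variable {S T : Type} {N : Net S T}

theorem FiresList.append' {M M₁ M' : S → ℕ} {a b : List T}
    (h1 : N.FiresList M a M₁) (h2 : N.FiresList M₁ b M') :
    N.FiresList M (a ++ b) M' := by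
  induction h1 with
  | nil => exact h2
  | cons hf _ ih => exact .cons hf (ih h2)

theorem FiresList.split' {M M' : S → ℕ} {a b : List T}
    (h : N.FiresList M (a ++ b) M') :
    ∃ M₁, N.FiresList M a M₁ ∧ N.FiresList M₁ b M' := by
  induction a generalizing M with
  | nil => exact ⟨M, .nil M, h⟩
  | cons t a ih =>
    rcases h with _ | ⟨hf, h⟩
    obtain ⟨M₁, h1, h2⟩ := ih h
    exact ⟨M₁, .cons hf h1, h2⟩

theorem FiresList.det' {M M₁ M₂ : S → ℕ} {a : List T}
    (h1 : N.FiresList M a M₁) (h2 : N.FiresList M a M₂) : M₁ = M₂ := by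
  induction a generalizing M with
  | nil => cases h1; cases h2; rfl
  | cons t a ih =>
    rcases h1 with _ | ⟨⟨_, e1⟩, h1⟩
    rcases h2 with _ | ⟨⟨_, e2⟩, h2⟩
    subst e1; subst e2
    exact ih h1 h2

theorem FiresList.uncons' {M M' : S → ℕ} {t : T} {a : List T}
    (h : N.FiresList M (t :: a) M') :
    ∃ M₁, N.Fires t M M₁ ∧ N.FiresList M₁ a M' := by
  cases h with
  | cons hf hrest => exact ⟨_, hf, hrest⟩

theorem Fires.det'' {M M₁ M₂ : S → ℕ} {t : T}
    (h1 : N.Fires t M M₁) (h2 : N.Fires t M M₂) : M₁ = M₂ := by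
  rw [h1.2, h2.2]

end Net


theorem closing_diamond_with {S T : Type} (N : Net S T)
    (hN : N.BinaryConflictFree) (σ ρ₁ ρ₂ : List T) (t : T) (hn : t ∉ ρ₁)
    (ht : N.FS (σ ++ [t])) (hρ : N.FS (σ ++ ρ₁ ++ t :: ρ₂)) :
    N.FS (σ ++ t :: (ρ₁ ++ ρ₂)) ∧
      Relation.ReflTransGen N.Adj (σ ++ t :: (ρ₁ ++ ρ₂)) (σ ++ ρ₁ ++ t :: ρ₂) := by
  induction ρ₁ generalizing σ with
  | nil =>
    constructor
    · simpa using hρ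
    · simp only [List.nil_append, List.append_nil]
      exact Relation.ReflTransGen.refl
  | cons u r ih =>
    have htu : t ≠ u := fun h => hn (h ▸ (List.mem_cons_self : u ∈ u :: r))
    have hnr : t ∉ r := fun h => hn (List.mem_cons_of_mem u h)
    -- decompose ht
    obtain ⟨Mt', htl⟩ := ht
    obtain ⟨M, hσ, htl2⟩ := htl.split'
    obtain ⟨Mt, hft, -⟩ := htl2.uncons'
    -- decompose hρ
    obtain ⟨Mend, hρl⟩ := hρ
    have hρl' : N.FiresList N.M0 (σ ++ (u :: (r ++ t :: ρ₂))) Mend := by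
      simpa using hρl
    obtain ⟨M₂, hσ₂, htail⟩ := hρl'.split'
    have hMM : M = M₂ := hσ.det' hσ₂
    subst hMM
    obtain ⟨Mu, hfu, htail⟩ := htail.uncons'
    obtain ⟨hEt, hMt⟩ := hft
    obtain ⟨hEu, hMu⟩ := hfu
    have h2 : N.Enabled2 t u M := hN M ⟨σ, hσ⟩ t u htu hEt hEu
    -- fire u after t, t after u, reach the same marking
    set Mtu : S → ℕ := fun s => (M s - N.pre t s + N.post t s) - N.pre u s + N.post u s with hMtu
    have hfut : N.Fires t Mu Mtu := by
      constructor
      · intro s; have := h2 s; simp [hMu]; omega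
      · funext s; have := h2 s; simp [hMu, hMtu]; omega
    have hftu : N.Fires u Mt Mtu := by
      constructor
      · intro s; have := h2 s; simp [hMt]; omega
      · funext s; simp [hMt, hMtu]
    -- apply the IH with σ ++ [u]
    have ht2 : N.FS ((σ ++ [u]) ++ [t]) := by
      refine ⟨Mtu, ?_⟩
      have h : N.FiresList N.M0 (σ ++ [u, t]) Mtu :=
        hσ.append' (.cons ⟨hEu, hMu⟩ (.cons hfut (.nil _)))
      simpa using h
    have hρ2 : N.FS ((σ ++ [u]) ++ r ++ t :: ρ₂) := by
      refine ⟨Mend, ?_⟩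
      have h : N.FiresList N.M0 (σ ++ (u :: (r ++ t :: ρ₂))) Mend :=
        hσ.append' (.cons ⟨hEu, hMu⟩ htail)
      simpa using h
    obtain ⟨hFS1, hRTG⟩ := ih (σ ++ [u]) hnr ht2 hρ2
    -- extract the tail from hFS1 to build the new firing sequence
    obtain ⟨Mf, hF1⟩ := hFS1
    have hF1' : N.FiresList N.M0 (σ ++ (u :: t :: (r ++ ρ₂))) Mf := by
      simpa using hF1
    obtain ⟨M₃, hσ₃, htail''⟩ := hF1'.split'
    have hM₃ : M = M₃ := hσ.det' hσ₃
    subst hM₃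
    obtain ⟨Mu', hfu', htail''⟩ := htail''.uncons'
    have hMu' : Mu' = Mu := hfu'.det'' ⟨hEu, hMu⟩
    subst hMu'
    obtain ⟨Mut', hft', htail''⟩ := htail''.uncons'
    have hMut' : Mut' = Mtu := hft'.det'' hfut
    subst hMut'
    -- the new firing sequence σ ++ t :: u :: (r ++ ρ₂)
    have hFSnew : N.FS (σ ++ t :: ((u :: r) ++ ρ₂)) := by
      refine ⟨Mf, ?_⟩
      have h : N.FiresList N.M0 (σ ++ (t :: u :: (r ++ ρ₂))) Mf :=
        hσ.append' (.cons ⟨hEt, hMt⟩ (.cons hftu htail''))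
      simpa using h
    refine ⟨hFSnew, ?_⟩
    have hAdj : N.Adj (σ ++ t :: ((u :: r) ++ ρ₂)) ((σ ++ [u]) ++ t :: (r ++ ρ₂)) := by
      refine ⟨σ, r ++ ρ₂, t, u, M, by simp, by simp, hσ, h2, hFSnew, ?_⟩
      exact ⟨Mf, hF1⟩
    have hRTG' : Relation.ReflTransGen N.Adj ((σ ++ [u]) ++ t :: (r ++ ρ₂))
        (σ ++ (u :: r) ++ t :: ρ₂) := by
      have h3 : (σ ++ [u]) ++ r ++ t :: ρ₂ = σ ++ (u :: r) ++ t :: ρ₂ := by simp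
      rw [← h3]
      exact hRTG
    exact Relation.ReflTransGen.head hAdj hRTG'
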